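/- Let A be a complex vector space of dimension n ≥ 2, c ∈ A nonzero with h(c,c) = 0, h a nonzero symmetric bilinear form, g(x) = −h(x,c), and define x*y = g(y)x + h(x,y)c. Then A is a left-symmetric algebra and h satisfies h(x*y, z) + h(y, x*z) = 0 for all x,y,z ∈ A. -/
import Mathlib


theorem stmt_11 (A : Type*) [AddCommGroup A] [Module ℂ A] [FiniteDimensional ℂ A]
    (hdim : 2 ≤ Module.finrank ℂ A)
    (c : A) (hc : c ≠ 0)
    (h : A →ₗ[ℂ] A →ₗ[ℂ] ℂ) (hne : h ≠ 0) (hsymm : ∀ x y, h x y = h y x)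
    (hcc : h c c = 0)
    (mul : A → A → A) (hmul : ∀ x y, mul x y = (-(h y c)) • x + h x y • c) :
    (∀ x y z : A,
      mul (mul x y) z - mul x (mul y z) = mul (mul y x) z - mul y (mul x z)) ∧
    (∀ x y z : A, h (mul x y) z + h y (mul x z) = 0) := by
  constructor
  · intro x y z
    simp only [hmul, map_add, map_smul, map_neg, LinearMap.add_apply, LinearMap.smul_apply,
      LinearMap.neg_apply, smul_eq_mul, hcc, smul_add, smul_smul]
    rw [hsymm x y, hsymm x c, hsymm y c]
    ring_nf
    module
  · intro x y z
    simp only [hmul, map_add, map_smul, map_neg, LinearMap.add_apply, LinearMap.smul_apply,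
      LinearMap.neg_apply, smul_eq_mul, hcc]
    rw [hsymm c z, hsymm x y]
    ring
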